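/- Let Ξ be a set, n ≥ 1, n₀ ≤ n, and J ≥ 1 integers, and suppose for each ξ ∈ Ξ we are given A_ξ ∈ ℝ^{J×n} and b_ξ ∈ ℝ^J. For each x ∈ ℝ^n with ‖x‖₀ ≤ n₀ define H_x = ∩_{j=1}^{J} {ξ ∈ Ξ : (A_ξ x)_j ≤ (b_ξ)_j}, and let 𝓗 = {H_x}_{x∈ℝ^n, ‖x‖₀ ≤ n₀} ∪ {Ξ}. Then d_VC(𝓗) ≤ (e/((e−1)·log 2)) · J · ( 2(n₀+1)·log₂( (n·e + e)/(n₀+1) ) ) · log( (e/log 2)·J ). -/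

import Mathlib

open MeasureTheory Real Set

/-- A family `H` of subsets of `α` shatters a finite set `S` if every subset `D ⊆ S`
can be picked out by some `C ∈ H`. -/
def ShattersFam {α : Type*} (H : Set (Set α)) (S : Finset α) : Prop :=
  ∀ D : Finset α, D ⊆ S → ∃ C ∈ H, (D : Set α) ⊆ C ∧ ((S : Set α) \ (D : Set α)) ∩ C = ∅

/-- The VC dimension of a family of subsets: the supremum (in `ℕ∞`) of cardinalities
of finite sets it shatters. -/
noncomputable def vcDim {α : Type*} (H : Set (Set α)) : ℕ∞ :=
  ⨆ S ∈ {S : Finset α | ShattersFam H S}, (S.card : ℕ∞)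

/-- If every set in `𝒬` is the "≤ 0 pattern" of some linear functional applied to `w`,
then `𝒬` cannot shatter a set larger than the dimension. -/
lemma shatters_card_le_finrank {ι : Type*} [Fintype ι] [DecidableEq ι]
    {V : Type*} [AddCommGroup V] [Module ℝ V] [FiniteDimensional ℝ V]
    (w : ι → V) (𝒬 : Finset (Finset ι))
    (h𝒬 : ∀ q ∈ 𝒬, ∃ φ : V →ₗ[ℝ] ℝ, ∀ i, i ∈ q ↔ φ (w i) ≤ 0)
    (s : Finset ι) (hs : 𝒬.Shatters s) : s.card ≤ Module.finrank ℝ V := by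
  by_contra hlt
  push_neg at hlt
  -- the family w restricted to s is linearly dependent
  have hnli : ¬ LinearIndependent ℝ (fun p : ↥s => w p.1) := by
    intro h
    have := h.fintype_card_le_finrank
    rw [Fintype.card_coe] at this
    omega
  rw [Fintype.not_linearIndependent_iff] at hnli
  obtain ⟨g, hgsum, p₀, hp₀⟩ := hnli
  -- core argument, applied to `g` or `-g`
  have core : ∀ g : ↥s → ℝ, (∑ p, g p • w p.1) = 0 → (∃ p, 0 < g p) → False := by
    intro g hgsum ⟨p₁, hp₁⟩
    set E : Finset ι := (s.attach.filter (fun p => g p ≤ 0)).image Subtype.val with hE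
    have hEs : E ⊆ s := by
      intro i hi
      simp only [hE, Finset.mem_image, Finset.mem_filter] at hi
      obtain ⟨p, _, rfl⟩ := hi
      exact p.2
    obtain ⟨q, hq𝒬, hsq⟩ := hs hEs
    obtain ⟨φ, hφ⟩ := h𝒬 q hq𝒬
    have hmemE : ∀ p : ↥s, p.1 ∈ E ↔ g p ≤ 0 := by
      intro p
      simp only [hE, Finset.mem_image, Finset.mem_filter]
      constructor
      · rintro ⟨p', ⟨-, h⟩, hval⟩
        rwa [Subtype.ext hval.symm]
      · intro h; exact ⟨p, ⟨Finset.mem_attach _ _, h⟩, rfl⟩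
    have hterm : ∀ p : ↥s, 0 ≤ g p * φ (w p.1) := by
      intro p
      rcases le_or_gt (g p) 0 with h | h
      · have : p.1 ∈ E := (hmemE p).2 h
        have hq : p.1 ∈ q := (Finset.mem_inter.1 (hsq ▸ this)).2
        have h2 := (hφ p.1).1 hq
        nlinarith
      · have : p.1 ∉ q := by
          intro hq
          have : p.1 ∈ E := hsq ▸ Finset.mem_inter.2 ⟨p.2, hq⟩
          exact absurd ((hmemE p).1 this) (not_le.2 h)
        have := (hφ p.1).not.1 this
        push_neg at this
        positivity
    have hpos : 0 < g p₁ * φ (w p₁.1) := by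
      have : p₁.1 ∉ q := by
        intro hq
        have : p₁.1 ∈ E := hsq ▸ Finset.mem_inter.2 ⟨p₁.2, hq⟩
        exact absurd ((hmemE p₁).1 this) (not_le.2 hp₁)
      have := (hφ p₁.1).not.1 this
      push_neg at this
      positivity
    have hzero : (∑ p : ↥s, g p * φ (w p.1)) = 0 := by
      have := congrArg φ hgsum
      rw [map_sum, map_zero] at this
      simpa [_root_.map_smul, smul_eq_mul] using this
    have : (0:ℝ) < ∑ p : ↥s, g p * φ (w p.1) :=
      Finset.sum_pos' (fun p _ => hterm p) ⟨p₁, Finset.mem_univ _, hpos⟩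
    rw [hzero] at this
    exact lt_irrefl _ this
  rcases hp₀.lt_or_gt with h | h
  · exact core (-g) (by simpa [neg_smul] using congrArg Neg.neg hgsum) ⟨p₀, by simpa using h⟩
  · exact core g hgsum ⟨p₀, h⟩

lemma sum_choose_le_pow (N D : ℕ) (hD : 1 ≤ D) (hDN : D ≤ N) :
    (∑ i ∈ Finset.Iic D, (N.choose i : ℝ)) ≤ (Real.exp 1 * N / D) ^ D := by
  have hN0 : (0:ℝ) < N := by
    have : 1 ≤ N := le_trans hD hDN
    exact_mod_cast Nat.lt_of_lt_of_le Nat.zero_lt_one this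
  have hD0 : (0:ℝ) < D := by exact_mod_cast hD
  set t : ℝ := (D:ℝ)/N with ht
  have ht0 : 0 < t := by positivity
  have ht1 : t ≤ 1 := by
    rw [ht, div_le_one hN0]; exact_mod_cast hDN
  have key : (∑ i ∈ Finset.Iic D, (N.choose i : ℝ)) * t^D ≤ (t+1)^N := by
    rw [add_pow]
    rw [Finset.sum_mul]
    refine le_trans (Finset.sum_le_sum ?_) (Finset.sum_le_sum_of_subset_of_nonneg ?_ ?_)
    · intro i hi
      rw [Finset.mem_Iic] at hi
      have : t^D ≤ t^i := pow_le_pow_of_le_one ht0.le ht1 hi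
      have hc : (0:ℝ) ≤ (N.choose i : ℝ) := by positivity
      calc (N.choose i : ℝ) * t^D ≤ (N.choose i : ℝ) * t^i := by nlinarith
        _ = t^i * 1^(N-i) * (N.choose i : ℝ) := by ring
    · intro i hi
      rw [Finset.mem_Iic] at hi
      rw [Finset.mem_range]
      omega
    · intro i _ _
      positivity
  have key2 : (t+1)^N ≤ Real.exp D := by
    have h1 : t + 1 ≤ Real.exp t := by
      have := Real.add_one_le_exp t; linarith
    have h2 : (t+1)^N ≤ (Real.exp t)^N := by
      apply pow_le_pow_left₀ (by positivity) h1
    refine h2.trans_eq ?_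
    rw [← Real.exp_nat_mul]
    congr 1
    rw [ht]; field_simp
  have htD : 0 < t^D := by positivity
  rw [← le_div_iff₀ htD] at key
  refine le_trans key (le_trans (div_le_div_of_nonneg_right key2 htD.le) (le_of_eq ?_))
  have hexp : Real.exp (D:ℝ) = Real.exp 1 ^ D := by
    rw [← Real.exp_nat_mul]; norm_num
  rw [hexp, ht, div_pow, div_div_eq_mul_div, div_pow, mul_pow]

set_option maxHeartbeats 1000000 in
lemma numeric_final (m n n0 J : ℕ) (hn : 1 ≤ n) (hn0 : n0 ≤ n) (hJ : 1 ≤ J)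
    (hstar : (2:ℕ)^m ≤ 1 + n.choose n0 * ∑ i ∈ Finset.Iic (n0+1), (m*J).choose i) :
    (m : ℝ) ≤ Real.exp 1 / ((Real.exp 1 - 1) * Real.log 2) * J *
        (2 * (n0 + 1) * Real.logb 2 ((n * Real.exp 1 + Real.exp 1) / (n0 + 1))) *
        Real.log (Real.exp 1 / Real.log 2 * J) := by
  have he : (2.7182818283:ℝ) < Real.exp 1 := Real.exp_one_gt_d9
  have he' : Real.exp 1 < 2.7182818286 := Real.exp_one_lt_d9
  have hl1 : Real.log 2 < 0.6931471808 := Real.log_two_lt_d9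
  have hl2 : (0.6931471803:ℝ) < Real.log 2 := Real.log_two_gt_d9
  set e : ℝ := Real.exp 1
  set l : ℝ := Real.log 2
  set k : ℝ := (n0:ℝ) + 1 with hk
  have hk1 : (1:ℝ) ≤ k := by simp [hk]
  have hkn : k ≤ (n:ℝ) + 1 := by
    simp only [hk]; exact_mod_cast Nat.succ_le_succ hn0
  have hkpos : (0:ℝ) < k := by linarith
  set L : ℝ := Real.logb 2 ((n * e + e) / k) with hL
  set y : ℝ := Real.log (e / l * J) with hy
  have hJ1 : (1:ℝ) ≤ (J:ℝ) := by exact_mod_cast hJ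
  -- the logb argument equals e(n+1)/k
  have harg : (n * e + e) / k = e * ((n:ℝ)+1) / k := by ring
  have hargge : e ≤ (n * e + e) / k := by
    rw [harg, le_div_iff₀ hkpos]
    nlinarith
  have hargpos : (0:ℝ) < (n * e + e) / k := by nlinarith
  -- L * l = log of the argument, and ≥ 1
  have hLl : L * l = Real.log ((n * e + e) / k) := by
    rw [hL, Real.logb, div_mul_cancel₀]
    exact ne_of_gt (by linarith : (0:ℝ) < l)
  have hLl1 : 1 ≤ L * l := by
    rw [hLl]
    calc (1:ℝ) = Real.log e := by simp [e]
      _ ≤ _ := Real.log_le_log (Real.exp_pos 1) hargge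
  have hlpos : (0:ℝ) < l := by linarith
  have hLpos : (0:ℝ) < L := by nlinarith
  have hL43 : (4:ℝ)/3 ≤ L := by nlinarith
  -- y ≥ 1
  have heJl : e ≤ e / l * J := by
    rw [div_mul_eq_mul_div, le_div_iff₀ hlpos]
    nlinarith
  have hy1 : (1:ℝ) ≤ y := by
    rw [hy]
    calc (1:ℝ) = Real.log e := by simp [e]
      _ ≤ _ := Real.log_le_log (Real.exp_pos 1) heJl
  have hepos : (0:ℝ) < e := Real.exp_pos 1
  have hegt1 : (1:ℝ) < e := by linarith
  have hden : (0:ℝ) < (e-1)*l := by nlinarith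
  rcases le_or_gt (m*J) (n0+1) with hcase | hcase
  · -- small case
    have hm : (m:ℝ) ≤ k := by
      have h0 : m ≤ m * J := Nat.le_mul_of_pos_right m (by omega)
      have : m ≤ n0 + 1 := le_trans h0 hcase
      rw [hk]; exact_mod_cast this
    have hK : (1:ℝ) ≤ e / ((e-1)*l) := by
      rw [le_div_iff₀ hden]
      have h1 : l ≤ 1 := by linarith
      have h2 : (e-1)*l ≤ (e-1)*1 := mul_le_mul_of_nonneg_left h1 (by linarith)
      linarith
    have hKJ : (1:ℝ) ≤ e / ((e-1)*l) * J := by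
      have := le_mul_of_one_le_right (le_trans zero_le_one hK) hJ1
      linarith
    have hP : (0:ℝ) ≤ 2*k*L := by positivity
    calc (m:ℝ) ≤ k := hm
      _ ≤ 2*k*L := by nlinarith
      _ ≤ e / ((e-1)*l) * J * (2*k*L) := le_mul_of_one_le_left hP hKJ
      _ ≤ e / ((e-1)*l) * J * (2*k*L) * y := by
          refine le_mul_of_one_le_right ?_ hy1
          positivity
  · -- main case
    have hm1 : 1 ≤ m := by
      rcases Nat.eq_zero_or_pos m with rfl | h
      · simp at hcase
      · exact h
    have hkmJ : k ≤ (m:ℝ) * J := by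
      rw [hk]
      have : (n0:ℕ)+1 ≤ m*J := le_of_lt hcase
      exact_mod_cast this
    have hmpos : (0:ℝ) < m := by exact_mod_cast hm1
    have hsum : (∑ i ∈ Finset.Iic (n0+1), ((m*J).choose i : ℝ)) ≤ (e * ((m:ℝ)*J) / k)^(n0+1) := by
      have h := sum_choose_le_pow (m*J) (n0+1) (by omega) (by exact_mod_cast hcase.le)
      convert h using 3 <;> push_cast <;> ring
    have hch : ((n.choose n0 : ℕ) : ℝ) ≤ (e * ((n:ℝ)+1) / k)^(n0+1) := by
      have h1 : n.choose n0 ≤ (n+1).choose (n0+1) := by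
        rw [Nat.choose_succ_succ]; omega
      have h2 : (((n+1).choose (n0+1) : ℕ) : ℝ) ≤ ∑ i ∈ Finset.Iic (n0+1), ((n+1).choose i : ℝ) :=
        Finset.single_le_sum (f := fun i => (((n+1).choose i : ℕ) : ℝ))
          (fun i _ => by positivity) (Finset.mem_Iic.2 le_rfl)
      have h3 := sum_choose_le_pow (n+1) (n0+1) (by omega) (by omega)
      have h4 : ((n.choose n0 : ℕ) : ℝ) ≤ (((n+1).choose (n0+1) : ℕ) : ℝ) := by exact_mod_cast h1
      refine le_trans h4 (le_trans h2 (le_trans h3 (le_of_eq ?_)))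
      push_cast; rw [hk]
    have hstarR : (2:ℝ)^m ≤ 1 + (n.choose n0 : ℝ) * ∑ i ∈ Finset.Iic (n0+1), ((m*J).choose i : ℝ) := by
      push_cast
      exact_mod_cast hstar
    set B1 : ℝ := (e * ((n:ℝ)+1) / k)^(n0+1) with hB1def
    set B2 : ℝ := (e * ((m:ℝ)*J) / k)^(n0+1) with hB2def
    have hbase1 : (1:ℝ) ≤ e * ((n:ℝ)+1) / k := by
      rw [le_div_iff₀ hkpos]; nlinarith
    have hbase2 : (1:ℝ) ≤ e * ((m:ℝ)*J) / k := by
      rw [le_div_iff₀ hkpos]; nlinarith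
    have hB1ge : (1:ℝ) ≤ B1 := one_le_pow₀ hbase1
    have hB2ge : (1:ℝ) ≤ B2 := one_le_pow₀ hbase2
    have hprod : (n.choose n0 : ℝ) * (∑ i ∈ Finset.Iic (n0+1), ((m*J).choose i : ℝ)) ≤ B1 * B2 := by
      apply mul_le_mul hch hsum (by positivity) (by positivity)
    have h2B : (2:ℝ)^m ≤ 2 * (B1 * B2) := by nlinarith
    -- take logs
    have hlog : (m:ℝ) * l ≤ l + (k * (L*l)) + k * Real.log (e * ((m:ℝ)*J) / k) := by
      have hl2 := Real.log_le_log (by positivity) h2B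
      rw [Real.log_pow] at hl2
      rw [Real.log_mul (by norm_num) (by positivity)] at hl2
      rw [Real.log_mul (by positivity) (by positivity)] at hl2
      rw [hB1def, hB2def, Real.log_pow, Real.log_pow] at hl2
      have hargeq : Real.log (e * ((n:ℝ)+1) / k) = L * l := by
        rw [hLl]; congr 1; rw [harg]
      rw [hargeq] at hl2
      have hkcast : ((n0:ℝ)+1) = k := by rw [hk]
      push_cast at hl2
      calc (m:ℝ) * l = l * m := by ring
        _ ≤ _ := by rw [hk]; linarith [hl2]
    -- bound log(e m J / k)
    have hlogu : Real.log (e * ((m:ℝ)*J) / k) ≤ (m:ℝ)*l/(k*e) + y := by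
      set u : ℝ := e * ((m:ℝ)*J) / k with hu
      set bb : ℝ := e^2 * J / l with hbb
      have hupos : 0 < u := by rw [hu]; positivity
      have hbbpos : 0 < bb := by rw [hbb]; positivity
      have h5 : Real.log u = Real.log (u/bb) + Real.log bb := by
        rw [← Real.log_mul (by positivity) (ne_of_gt hbbpos)]
        congr 1; field_simp
      have h6 : Real.log (u/bb) ≤ u/bb - 1 := Real.log_le_sub_one_of_pos (by positivity)
      have h7 : u/bb = (m:ℝ)*l/(k*e) := by
        rw [hu, hbb]; field_simp
      have h8 : Real.log bb = 1 + y := by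
        rw [hbb, hy]
        rw [show e^2 * (J:ℝ) / l = e * (e / l * J) by ring]
        rw [Real.log_mul (ne_of_gt hepos) (by positivity)]
        simp [e]
      rw [h5, h8, ← h7]
      linarith
    have hklog : k * Real.log (e * ((m:ℝ)*J) / k) ≤ (m:ℝ)*l/e + k*y := by
      have := mul_le_mul_of_nonneg_left hlogu hkpos.le
      have heq : k * ((m:ℝ)*l/(k*e)) = (m:ℝ)*l/e := by field_simp
      have heq2 : k * ((m:ℝ)*l/(k*e) + y) = (m:ℝ)*l/e + k*y := by
        rw [mul_add, heq]
      linarith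
    -- middle inequality
    clear hstarR hprod h2B hsum hch hstar hlogu hbase1 hbase2 hB1ge hB2ge hB1def hB2def
    clear B1 B2
    clear_value e l k L y
    clear hLl harg hargge hargpos heJl hy hL hk hkmJ
    have hLy : (0:ℝ) < L * y := by positivity
    have hky : (0:ℝ) ≤ k*y := by positivity
    have hkL : (0:ℝ) ≤ k*L := by positivity
    have t3 : k*y ≤ (3/4)*(k*L*y) := by
      calc k*y = (k*y)*1 := by ring
        _ ≤ (k*y)*((3/4)*L) := mul_le_mul_of_nonneg_left (by linarith) hky
        _ = (3/4)*(k*L*y) := by ring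
    have t2 : k*(L*l) ≤ (3/4)*(k*L*y) := by
      calc k*(L*l) = (k*L)*l := by ring
        _ ≤ (k*L)*((3/4)*y) := mul_le_mul_of_nonneg_left (by linarith) hkL
        _ = (3/4)*(k*L*y) := by ring
    have t1 : l ≤ (1/2)*(k*L*y) := by
      have hll : l*l < (1:ℝ)/2 := by
        have h := mul_lt_mul' hl1.le hl1 hlpos.le (by norm_num : (0:ℝ) < 0.6931471808)
        nlinarith [h]
      have h2l : 2*l ≤ L := by
        have h : (2*l)*l < L*l := by nlinarith [hll, hLl1]
        exact le_of_lt (lt_of_mul_lt_mul_right h hlpos.le)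
      have hstep1 : L ≤ k*L := le_mul_of_one_le_left hLpos.le hk1
      have hstep2 : k*L ≤ k*L*y := le_mul_of_one_le_right (by positivity) hy1
      linarith
    have hmid : l + k*(L*l) + k*y ≤ 2*(k*L*y) := by linarith
    have hmid2 : 2*(k*L*y) ≤ 2*(k*L*y)*J := le_mul_of_one_le_right (by positivity) hJ1
    -- combine
    have hfin : (m:ℝ)*l - (m:ℝ)*l/e ≤ 2*(k*L*y)*J := by linarith
    have hmul : ((m:ℝ)*l - (m:ℝ)*l/e)*e ≤ 2*(k*L*y)*J*e :=
      mul_le_mul_of_nonneg_right hfin hepos.le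
    have hsimp : ((m:ℝ)*l - (m:ℝ)*l/e)*e = (m:ℝ)*l*e - (m:ℝ)*l := by field_simp
    have key : (m:ℝ) * ((e-1)*l) ≤ e * ((J:ℝ)*(2*k*L)*y) := by
      rw [hsimp] at hmul
      have e1 : (m:ℝ)*((e-1)*l) = (m:ℝ)*l*e - (m:ℝ)*l := by ring
      have e2 : e*((J:ℝ)*(2*k*L)*y) = 2*(k*L*y)*(J:ℝ)*e := by ring
      linarith
    rw [show e/((e-1)*l) * (J:ℝ) * (2*k*L) * y = e * ((J:ℝ)*(2*k*L)*y)/((e-1)*l) by ring,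
      le_div_iff₀ hden]
    exact key

lemma counting {Ξ : Type*} (n n0 J : ℕ) (hn0 : n0 ≤ n)
    (A : Ξ → Matrix (Fin J) (Fin n) ℝ) (b : Ξ → Fin J → ℝ) (S : Finset Ξ)
    (hS : ShattersFam
        (((fun x : Fin n → ℝ => {ξ | ∀ j : Fin J, (A ξ).mulVec x j ≤ b ξ j}) ''
            {x : Fin n → ℝ | {i | x i ≠ 0}.ncard ≤ n0}) ∪ {Set.univ}) S) :
    2 ^ S.card ≤ 1 + n.choose n0 * ∑ i ∈ Finset.Iic (n0+1), (S.card * J).choose i := by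
  classical
  set trc : (Fin n → ℝ) → Finset ↥S :=
    fun x => Finset.univ.filter (fun ξ : ↥S => ∀ j : Fin J, (A ξ.1).mulVec x j ≤ b ξ.1 j)
    with htrc
  -- Step 1: every subset of ↥S is `univ` or a trace of a sparse x
  have hall : ∀ t : Finset ↥S, t = Finset.univ ∨
      ∃ x : Fin n → ℝ, {i | x i ≠ 0}.ncard ≤ n0 ∧ trc x = t := by
    intro t
    have hDsub : t.image Subtype.val ⊆ S := by
      intro ξ hξ
      simp only [Finset.mem_image] at hξ
      obtain ⟨a, -, rfl⟩ := hξ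
      exact a.2
    obtain ⟨C, hC, hDC, hCD⟩ := hS (t.image Subtype.val) hDsub
    rcases hC with hC | hC
    · right
      obtain ⟨x, hx, rfl⟩ := hC
      refine ⟨x, hx, ?_⟩
      ext ξ
      simp only [htrc, Finset.mem_filter, Finset.mem_univ, true_and]
      constructor
      · intro hξC
        by_contra hξt
        have h1 : (ξ : Ξ) ∈ ((S : Set Ξ) \ (t.image Subtype.val : Finset Ξ)) ∩
            {ξ | ∀ j : Fin J, (A ξ).mulVec x j ≤ b ξ j} := by
          refine ⟨⟨ξ.2, ?_⟩, hξC⟩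
          intro hmem
          simp only [Finset.coe_image, Set.mem_image, Finset.mem_coe] at hmem
          obtain ⟨a, ha, hav⟩ := hmem
          exact hξt (by rwa [← Subtype.ext hav.symm] at ha)
        rw [hCD] at h1
        exact h1
      · intro hξt
        have : (ξ : Ξ) ∈ (t.image Subtype.val : Finset Ξ) := Finset.mem_image_of_mem _ hξt
        exact hDC this
    · left
      rw [Set.mem_singleton_iff] at hC
      subst hC
      have hSD : (S : Set Ξ) ⊆ (t.image Subtype.val : Finset Ξ) := by
        intro ξ hξ
        by_contra hmem
        have : ξ ∈ ((S : Set Ξ) \ (t.image Subtype.val : Finset Ξ)) ∩ Set.univ :=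
          ⟨⟨hξ, hmem⟩, trivial⟩
        rw [hCD] at this
        exact this
      ext ξ
      simp only [Finset.mem_univ, iff_true]
      have := hSD ξ.2
      simp only [Finset.coe_image, Set.mem_image, Finset.mem_coe] at this
      obtain ⟨a, ha, hav⟩ := this
      rwa [← Subtype.ext hav.symm] at ha
  -- Step 2: 2^|S| ≤ 1 + #𝒯
  set 𝒯 : Finset (Finset ↥S) :=
    Finset.univ.filter (fun t => ∃ x : Fin n → ℝ, {i | x i ≠ 0}.ncard ≤ n0 ∧ trc x = t)
    with h𝒯
  have hsub2 : (Finset.univ : Finset (Finset ↥S)) ⊆ insert Finset.univ 𝒯 := by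
    intro t _
    rcases hall t with rfl | h
    · exact Finset.mem_insert_self _ _
    · exact Finset.mem_insert_of_mem (Finset.mem_filter.2 ⟨Finset.mem_univ _, h⟩)
  have hcard2 : 2 ^ S.card ≤ 1 + 𝒯.card := by
    have h1 : (Finset.univ : Finset (Finset ↥S)).card ≤ (insert Finset.univ 𝒯).card :=
      Finset.card_le_card hsub2
    have h2 : (Finset.univ : Finset (Finset ↥S)).card = 2 ^ S.card := by
      rw [Finset.card_univ, Fintype.card_finset, Fintype.card_coe]
    have h3 : (insert Finset.univ 𝒯).card ≤ 1 + 𝒯.card := by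
      rw [add_comm]
      exact Finset.card_insert_le _ _
    omega
  -- Step 3: split by support
  set Q : ℕ := ∑ i ∈ Finset.Iic (n0+1), (S.card * J).choose i with hQ
  have hT_bound : ∀ T : Finset (Fin n), T.card ≤ n0 →
      (Finset.univ.filter (fun t : Finset ↥S =>
        ∃ x : Fin n → ℝ, (∀ i, i ∉ T → x i = 0) ∧ trc x = t)).card ≤ Q := by
    intro T hTcard
    set pat : (Fin n → ℝ) → Finset (↥S × Fin J) :=
      fun x => Finset.univ.filter (fun p => (A p.1.1).mulVec x p.2 ≤ b p.1.1 p.2) with hpat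
    set 𝒬 : Finset (Finset (↥S × Fin J)) :=
      Finset.univ.filter (fun q => ∃ x : Fin n → ℝ, (∀ i, i ∉ T → x i = 0) ∧ pat x = q) with h𝒬def
    set f : Finset (↥S × Fin J) → Finset ↥S :=
      fun q => Finset.univ.filter (fun ξ => ∀ j : Fin J, (ξ, j) ∈ q) with hf
    have htf : ∀ x : Fin n → ℝ, trc x = f (pat x) := by
      intro x; ext ξ; simp [htrc, hf, hpat]
    have hsub : Finset.univ.filter (fun t : Finset ↥S =>
        ∃ x : Fin n → ℝ, (∀ i, i ∉ T → x i = 0) ∧ trc x = t) ⊆ 𝒬.image f := by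
      intro t ht
      rw [Finset.mem_filter] at ht
      obtain ⟨-, x, hx, rfl⟩ := ht
      exact Finset.mem_image.2 ⟨pat x,
        Finset.mem_filter.2 ⟨Finset.mem_univ _, x, hx, rfl⟩, (htf x).symm⟩
    have h1 : (Finset.univ.filter (fun t : Finset ↥S =>
        ∃ x : Fin n → ℝ, (∀ i, i ∉ T → x i = 0) ∧ trc x = t)).card ≤ 𝒬.card :=
      le_trans (Finset.card_le_card hsub) Finset.card_image_le
    have hrank : Module.finrank ℝ ((↥T → ℝ) × ℝ) = T.card + 1 := by
      rw [Module.finrank_prod, Module.finrank_pi, Module.finrank_self, Fintype.card_coe]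
    have hvc : 𝒬.vcDim ≤ n0 + 1 := by
      apply Finset.sup_le
      intro s hs
      rw [Finset.mem_shatterer] at hs
      have hlin : ∀ q ∈ 𝒬, ∃ φ : ((↥T → ℝ) × ℝ) →ₗ[ℝ] ℝ, ∀ p : ↥S × Fin J,
          p ∈ q ↔ φ ((fun i : ↥T => A p.1.1 p.2 i.1), - b p.1.1 p.2) ≤ 0 := by
        intro q hq
        rw [h𝒬def, Finset.mem_filter] at hq
        obtain ⟨-, x, hx, rfl⟩ := hq
        refine ⟨{ toFun := fun v => (∑ i : ↥T, v.1 i * x i.1) + v.2,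
                  map_add' := ?_, map_smul' := ?_ }, ?_⟩
        · intro u v
          simp only [Prod.fst_add, Prod.snd_add, Pi.add_apply, add_mul]
          rw [Finset.sum_add_distrib]; ring
        · intro c v
          simp only [Prod.smul_fst, Prod.smul_snd, Pi.smul_apply, smul_eq_mul,
            RingHom.id_apply, mul_add, Finset.mul_sum, mul_assoc]
        · intro p
          have heq : (A p.1.1).mulVec x p.2 = ∑ i : ↥T, A p.1.1 p.2 i.1 * x i.1 := by
            rw [Matrix.mulVec, dotProduct]
            have h5 : ∑ i : Fin n, A p.1.1 p.2 i * x i = ∑ i ∈ T, A p.1.1 p.2 i * x i :=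
              (Finset.sum_subset (T.subset_univ)
                (fun i _ hi => by rw [hx i hi, mul_zero])).symm
            rw [h5, ← Finset.sum_coe_sort T (fun i => A p.1.1 p.2 i * x i)]
          simp only [hpat, Finset.mem_filter, Finset.mem_univ, true_and, LinearMap.coe_mk,
            AddHom.coe_mk]
          rw [heq]
          constructor <;> intro h5 <;> linarith
      have hb : s.card ≤ Module.finrank ℝ ((↥T → ℝ) × ℝ) := by
        apply shatters_card_le_finrank
          (fun p : ↥S × Fin J => ((fun i : ↥T => A p.1.1 p.2 i.1), - b p.1.1 p.2)) 𝒬 hlin s hs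
      rw [hrank] at hb
      exact hb.trans (Nat.succ_le_succ hTcard)
    have h2 : 𝒬.card ≤ Q := by
      calc 𝒬.card ≤ 𝒬.shatterer.card := Finset.card_le_card_shatterer 𝒬
        _ ≤ ∑ k ∈ Finset.Iic 𝒬.vcDim, (Fintype.card (↥S × Fin J)).choose k :=
            Finset.card_shatterer_le_sum_vcDim
        _ ≤ ∑ k ∈ Finset.Iic (n0+1), (Fintype.card (↥S × Fin J)).choose k :=
            Finset.sum_le_sum_of_subset (Finset.Iic_subset_Iic.2 hvc)
        _ = Q := by
            rw [hQ]
            congr 1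
            simp [Fintype.card_prod, Fintype.card_coe]
    exact le_trans h1 h2
  have hsplit : 𝒯 ⊆ (Finset.univ.powersetCard n0 : Finset (Finset (Fin n))).biUnion
      (fun T => Finset.univ.filter (fun t : Finset ↥S =>
        ∃ x : Fin n → ℝ, (∀ i, i ∉ T → x i = 0) ∧ trc x = t)) := by
    intro t ht
    rw [h𝒯, Finset.mem_filter] at ht
    obtain ⟨-, x, hx, rfl⟩ := ht
    set supp : Finset (Fin n) := Finset.univ.filter (fun i => x i ≠ 0) with hsupp
    have hsc : supp.card ≤ n0 := by
      have : ({i | x i ≠ 0} : Set (Fin n)) = ↑supp := by ext i; simp [hsupp]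
      rw [this, Set.ncard_coe_finset] at hx
      exact hx
    obtain ⟨T, hsubT, -, hTcard⟩ :=
      Finset.exists_subsuperset_card_eq (Finset.subset_univ supp) hsc
        (by simpa using hn0)
    refine Finset.mem_biUnion.2 ⟨T, ?_, ?_⟩
    · exact Finset.mem_powersetCard_univ.2 hTcard
    · refine Finset.mem_filter.2 ⟨Finset.mem_univ _, x, ?_, rfl⟩
      intro i hiT
      by_contra hxi
      exact hiT (hsubT (by simp [hsupp, hxi]))
  have hcard3 : 𝒯.card ≤ n.choose n0 * Q := by
    refine le_trans (Finset.card_le_card hsplit) (le_trans (Finset.card_biUnion_le) ?_)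
    have := Finset.sum_le_card_nsmul (Finset.univ.powersetCard n0 : Finset (Finset (Fin n)))
      _ Q (fun T hT => hT_bound T (le_of_eq (Finset.mem_powersetCard_univ.1 hT)))
    simpa [Finset.card_powersetCard, smul_eq_mul] using this
  omega

/-- VC bound with sparse first-stage decisions.
For `n₀`-sparse `x`, `H_x = ∩_{j≤J} {ξ : (A_ξ x)_j ≤ (b_ξ)_j}` and
`𝓗 = {H_x : ‖x‖₀ ≤ n₀} ∪ {Ξ}`, we have
`d_VC(𝓗) ≤ (e/((e−1) log 2)) J (2(n₀+1) log₂((n e + e)/(n₀+1))) log((e/log 2) J)`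
(stated via shattered sets). -/
theorem statement_14 {Ξ : Type*} (n n0 J : ℕ) (hn : 1 ≤ n) (hn0 : n0 ≤ n) (hJ : 1 ≤ J)
    (A : Ξ → Matrix (Fin J) (Fin n) ℝ) (b : Ξ → Fin J → ℝ) :
    ∀ S : Finset Ξ,
      ShattersFam
        (((fun x : Fin n → ℝ => {ξ | ∀ j : Fin J, (A ξ).mulVec x j ≤ b ξ j}) ''
            {x : Fin n → ℝ | {i | x i ≠ 0}.ncard ≤ n0}) ∪ {Set.univ}) S →
      (S.card : ℝ) ≤ Real.exp 1 / ((Real.exp 1 - 1) * Real.log 2) * J *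
        (2 * (n0 + 1) * Real.logb 2 ((n * Real.exp 1 + Real.exp 1) / (n0 + 1))) *
        Real.log (Real.exp 1 / Real.log 2 * J) := by
  intro S hS
  exact numeric_final S.card n n0 J hn hn0 hJ (counting n n0 J hn0 A b S hS)
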